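/- Fix ν ∈ [0,1), α > 0, ρ ∈ (0,1) and J ∈ ℤ_{>0}. For every T > 0 there exist constants C < ∞ and ε₀ ∈ (0,1] such that for every ε ∈ (0,ε₀], every t ∈ ℕ with t ≤ ε^{−3}T, and every n ∈ ℕ, the t-fold convolution P_ε^t of the time-inhomogeneous tilted step distributions satisfies P_ε^t(n) ≤ C ε^{−1/2} (t+1)^{−1/2}. -/

import Mathlib

/-- The step distribution with parameters `(q, ᾱ, ν)`:
`p(0) = 1 − ᾱ(1−q)/(1+ᾱ)` and
`p(n) = (ᾱ(1−q)(1−ν)/(1+ᾱ)²)·((ν+ᾱ)/(1+ᾱ))^{n−1}` for `n ≥ 1`. -/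
noncomputable def stepDist (q a ν : ℝ) : ℕ → ℝ := fun n =>
  if n = 0 then 1 - a * (1 - q) / (1 + a)
  else (a * (1 - q) * (1 - ν) / (1 + a) ^ 2) * ((ν + a) / (1 + a)) ^ (n - 1)

/-- The tilted step distribution with parameters `(q, ᾱ, ν, ρ)`:
`f(n) = λ ρ^n p(n)` where `γ = (1−ρ)/(1−νρ)` and `λ = (1+ᾱγ)/(1+qᾱγ)`. -/
noncomputable def tiltedStepDist (q a ν ρ : ℝ) : ℕ → ℝ := fun n =>
  ((1 + a * ((1 - ρ) / (1 - ν * ρ))) / (1 + q * a * ((1 - ρ) / (1 - ν * ρ)))) *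
    ρ ^ n * stepDist q a ν n

/-- Convolution of two mass functions on `ℕ`: `(g*h)(n) = ∑_{m=0}^{n} g(m) h(n−m)`. -/
noncomputable def pmfConv (g h : ℕ → ℝ) : ℕ → ℝ := fun n =>
  ∑ m ∈ Finset.range (n + 1), g m * h (n - m)

/-- The `t`-fold convolution `P_ε^t = f_ε^{(0)} * ⋯ * f_ε^{(t−1)}` of the
time-inhomogeneous tilted step distributions, where `f_ε^{(s)}` is the tilted step
distribution with parameters `(e^{−ε}, α e^{−ε·(s mod J)}, ν, ρ)`. -/
noncomputable def tiltedConvIter (ν α ρ ε : ℝ) (J : ℕ) : ℕ → ℕ → ℝ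
  | 0 => fun n => if n = 0 then 1 else 0
  | t + 1 => pmfConv (tiltedConvIter ν α ρ ε J t)
      (tiltedStepDist (Real.exp (-ε)) (α * Real.exp (-ε * ((t % J : ℕ) : ℝ))) ν ρ)

/- STATEMENT 15 is proved as `tiltedConvIter_sup_bound` below. -/
open Finset

section AUX

open Finset

noncomputable def psum (g : ℕ → ℝ) (N : ℕ) : ℝ := ∑ n ∈ range N, g n

def Subpmf (g : ℕ → ℝ) : Prop := (∀ n, 0 ≤ g n) ∧ ∀ N, psum g N ≤ 1

lemma mk_pmfConv (g h : ℕ → ℝ) :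
    PowerSeries.mk (pmfConv g h) = PowerSeries.mk g * PowerSeries.mk h := by
  ext n
  rw [PowerSeries.coeff_mk, PowerSeries.coeff_mul,
    Finset.Nat.sum_antidiagonal_eq_sum_range_succ_mk]
  simp [pmfConv]

lemma pmfConv_eq_coeff (g h : ℕ → ℝ) (n : ℕ) :
    pmfConv g h n = PowerSeries.coeff n (PowerSeries.mk g * PowerSeries.mk h) := by
  rw [← mk_pmfConv, PowerSeries.coeff_mk]

lemma pmfConv_assoc (g h e : ℕ → ℝ) :
    pmfConv (pmfConv g h) e = pmfConv g (pmfConv h e) := by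
  funext n
  rw [pmfConv_eq_coeff, pmfConv_eq_coeff, mk_pmfConv, mk_pmfConv, mul_assoc]

lemma pmfConv_comm (g h : ℕ → ℝ) : pmfConv g h = pmfConv h g := by
  funext n
  rw [pmfConv_eq_coeff, pmfConv_eq_coeff, mul_comm]

lemma pmfConv_nonneg {g h : ℕ → ℝ} (hg : ∀ n, 0 ≤ g n) (hh : ∀ n, 0 ≤ h n) (n : ℕ) :
    0 ≤ pmfConv g h n :=
  Finset.sum_nonneg fun m _ => mul_nonneg (hg m) (hh _)

lemma pmfConv_mono_left {g g' h : ℕ → ℝ} (hgg : ∀ n, g n ≤ g' n) (hh : ∀ n, 0 ≤ h n) (n : ℕ) :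
    pmfConv g h n ≤ pmfConv g' h n :=
  Finset.sum_le_sum fun m _ => mul_le_mul_of_nonneg_right (hgg m) (hh _)

lemma pmfConv_comb (g h₁ h₂ : ℕ → ℝ) (a b : ℝ) (n : ℕ) :
    pmfConv g (fun m => a * h₁ m + b * h₂ m) n = a * pmfConv g h₁ n + b * pmfConv g h₂ n := by
  simp only [pmfConv, mul_add, Finset.sum_add_distrib, Finset.mul_sum]
  congr 1 <;> (apply Finset.sum_congr rfl; intro m _; ring)

lemma pmfConv_sum_left {ι : Type*} (s : Finset ι) (G : ι → ℕ → ℝ) (h : ℕ → ℝ) (n : ℕ) :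
    pmfConv (fun m => ∑ i ∈ s, G i m) h n = ∑ i ∈ s, pmfConv (G i) h n := by
  simp only [pmfConv, Finset.sum_mul]
  rw [Finset.sum_comm]

lemma psum_pmfConv_eq (g h : ℕ → ℝ) (N : ℕ) :
    psum (pmfConv g h) N = ∑ m ∈ range N, g m * psum h (N - m) := by
  induction N with
  | zero => simp [psum]
  | succ N ih =>
    rw [psum, Finset.sum_range_succ, ← psum, ih]
    rw [Finset.sum_range_succ (fun m => g m * psum h (N + 1 - m))]
    have h1 : ∀ m ∈ range N, g m * psum h (N + 1 - m)
        = g m * psum h (N - m) + g m * h (N - m) := by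
      intro m hm
      simp only [Finset.mem_range] at hm
      have : N + 1 - m = (N - m) + 1 := by omega
      rw [this, psum, Finset.sum_range_succ, ← psum, mul_add]
    rw [Finset.sum_congr rfl h1, Finset.sum_add_distrib]
    have h2 : pmfConv g h N = ∑ m ∈ range N, g m * h (N - m) + g N * h 0 := by
      rw [pmfConv, Finset.sum_range_succ]; simp
    rw [h2]
    simp [psum]
    ring

lemma Subpmf.conv {g h : ℕ → ℝ} (hg : Subpmf g) (hh : Subpmf h) : Subpmf (pmfConv g h) := by
  refine ⟨pmfConv_nonneg hg.1 hh.1, fun N => ?_⟩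
  rw [psum_pmfConv_eq]
  calc ∑ m ∈ range N, g m * psum h (N - m) ≤ ∑ m ∈ range N, g m * 1 :=
        Finset.sum_le_sum fun m _ => mul_le_mul_of_nonneg_left (hh.2 _) (hg.1 m)
    _ ≤ 1 := by simpa [psum] using hg.2 N
open Finset

noncomputable def bern (k : ℕ) : ℕ → ℝ := fun n => (k.choose n : ℝ) / 2 ^ k

lemma bern_nonneg (k n : ℕ) : 0 ≤ bern k n :=
  div_nonneg (Nat.cast_nonneg _) (by positivity)

lemma sum_choose_le (k N : ℕ) : (∑ n ∈ range N, k.choose n) ≤ 2 ^ k := by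
  calc (∑ n ∈ range N, k.choose n) ≤ ∑ n ∈ range (max N (k+1)), k.choose n :=
        Finset.sum_le_sum_of_subset (Finset.range_subset_range.2 (le_max_left _ _))
    _ = ∑ n ∈ range (k+1), k.choose n := by
        refine (Finset.sum_subset (Finset.range_subset_range.2 (le_max_right _ _)) ?_).symm
        intro x hx hx'
        simp only [Finset.mem_range] at hx hx'
        exact Nat.choose_eq_zero_of_lt (by omega)
    _ = 2 ^ k := Nat.sum_range_choose k

lemma cb_sq_bound : ∀ j : ℕ, ((Nat.centralBinom j : ℝ)) ^ 2 * (j + 1) ≤ 16 ^ j := by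
  intro j
  induction j with
  | zero => simp [Nat.centralBinom]
  | succ j ih =>
    set cb0 := (Nat.centralBinom j : ℝ) with hcb0
    set cb1 := (Nat.centralBinom (j+1) : ℝ) with hcb1
    have key : ((j : ℝ) + 1) * cb1 = 2 * (2 * (j:ℝ) + 1) * cb0 := by
      have h := Nat.succ_mul_centralBinom_succ j
      have h2 := congrArg (fun x : ℕ => (x : ℝ)) h
      push_cast at h2
      linarith [h2]
    have h1 : (((j:ℝ)+1) * cb1)^2 = (2*(2*(j:ℝ)+1) * cb0)^2 := by rw [key]
    have hpoly : 4*(2*(j:ℝ)+1)^2*((j:ℝ)+2) ≤ 16*((j:ℝ)+1)^3 := by nlinarith [sq_nonneg ((j:ℝ))]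
    have h16 : (0:ℝ) ≤ (16:ℝ)^j := by positivity
    have step1 : cb1^2*(((j:ℝ)+1)+1)*((j:ℝ)+1)^3 ≤ 16^(j+1)*((j:ℝ)+1)^3 := by
      calc cb1^2*(((j:ℝ)+1)+1)*((j:ℝ)+1)^3
          = (4*(2*(j:ℝ)+1)^2*((j:ℝ)+2)) * (cb0^2*((j:ℝ)+1)) := by
            linear_combination (((j:ℝ)+2)*((j:ℝ)+1)) * h1
        _ ≤ (4*(2*(j:ℝ)+1)^2*((j:ℝ)+2)) * 16^j :=
            mul_le_mul_of_nonneg_left ih (by positivity)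
        _ ≤ (16*((j:ℝ)+1)^3) * 16^j := mul_le_mul_of_nonneg_right hpoly h16
        _ = 16^(j+1)*((j:ℝ)+1)^3 := by ring
    have hpos : (0:ℝ) < ((j:ℝ)+1)^3 := by positivity
    have h3 := le_of_mul_le_mul_right step1 hpos
    push_cast
    exact h3
open Finset

lemma cb_div_le (j : ℕ) : (Nat.centralBinom j : ℝ) / 4 ^ j ≤ 1 / Real.sqrt (j + 1) := by
  have hs : (0:ℝ) < Real.sqrt (j+1) := Real.sqrt_pos.2 (by positivity)
  have h4 : (0:ℝ) < 4 ^ j := by positivity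
  rw [div_le_div_iff₀ h4 hs, one_mul]
  refine le_of_sq_le_sq ?_ (by positivity)
  have h2 : ((Nat.centralBinom j : ℝ) * Real.sqrt (j+1))^2
      = (Nat.centralBinom j : ℝ)^2 * ((j:ℝ)+1) := by
    rw [mul_pow, Real.sq_sqrt (by positivity : (0:ℝ) ≤ (j:ℝ)+1)]
  rw [h2]
  calc (Nat.centralBinom j : ℝ)^2 * ((j:ℝ)+1) ≤ 16^j := cb_sq_bound j
    _ = (4^j)^2 := by rw [← pow_mul, mul_comm, pow_mul]; norm_num

lemma sqrt_frac_le {aa bb : ℝ} (h0 : 0 < aa) (hb : 0 < bb) (hab : bb ≤ 2 * aa) :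
    1 / Real.sqrt aa ≤ Real.sqrt 2 / Real.sqrt bb := by
  have h2 : Real.sqrt bb ≤ Real.sqrt 2 * Real.sqrt aa := by
    rw [← Real.sqrt_mul (by norm_num : (0:ℝ) ≤ 2)]
    exact Real.sqrt_le_sqrt hab
  rw [div_le_div_iff₀ (Real.sqrt_pos.2 h0) (Real.sqrt_pos.2 hb), one_mul]
  linarith [h2]

lemma bern_le (k n : ℕ) : bern k n ≤ Real.sqrt 2 / Real.sqrt (k + 1) := by
  have hmid : bern k n ≤ (k.choose (k/2) : ℝ) / 2^k :=
    div_le_div_of_nonneg_right (Nat.cast_le.2 (Nat.choose_le_middle n k)) (by positivity)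
  refine hmid.trans ?_
  rcases Nat.even_or_odd' k with ⟨j, hk | hk⟩
  · subst hk
    have hdiv : (2*j)/2 = j := by omega
    rw [hdiv]
    have h2 : ((2*j).choose j : ℝ) = (Nat.centralBinom j : ℝ) := by rw [Nat.centralBinom]
    have h4 : ((2:ℝ))^(2*j) = 4^j := by rw [pow_mul]; norm_num
    rw [h2, h4]
    refine (cb_div_le j).trans ?_
    have : ((2*j : ℕ):ℝ) + 1 = 2*(j:ℝ)+1 := by push_cast; ring
    rw [this]
    exact sqrt_frac_le (by positivity) (by positivity) (by linarith)
  · subst hk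
    have hdiv : (2*j+1)/2 = j := by omega
    rw [hdiv]
    have hch : 2 * (2*j+1).choose j = Nat.centralBinom (j+1) := by
      rw [Nat.centralBinom]
      have h1 : 2*(j+1) = (2*j+1)+1 := by ring
      rw [h1, Nat.choose_succ_succ' (2*j+1), Nat.choose_symm_half j]
      ring
    have e2 : (Nat.centralBinom (j+1) : ℝ) = 2 * ((2*j+1).choose j : ℝ) := by
      exact_mod_cast congrArg (fun x : ℕ => (x:ℝ)) hch.symm
    have e1 : ((4:ℝ))^(j+1) = 2 * 2^(2*j+1) := by
      rw [show (4:ℝ) = 2^2 by norm_num, ← pow_mul, show 2*(j+1) = (2*j+1)+1 by ring, pow_succ]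
      ring
    have e3 : ((2*j+1).choose j : ℝ) / 2^(2*j+1) = (Nat.centralBinom (j+1) : ℝ)/4^(j+1) := by
      rw [e2, e1, mul_div_mul_left _ _ (two_ne_zero)]
    rw [e3]
    refine (cb_div_le (j+1)).trans ?_
    have e4 : ((j+1:ℕ):ℝ) + 1 = (j:ℝ) + 2 := by push_cast; ring
    have e5 : ((2*j+1:ℕ):ℝ) + 1 = 2*(j:ℝ)+2 := by push_cast; ring
    rw [e4, e5]
    exact sqrt_frac_le (by positivity) (by positivity) (by linarith)
open Finset

noncomputable def delta0 : ℕ → ℝ := fun n => if n = 0 then 1 else 0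

lemma delta0_subpmf : Subpmf delta0 := by
  constructor
  · intro n; unfold delta0; split <;> norm_num
  · intro N
    unfold psum delta0
    rcases Nat.eq_zero_or_pos N with h | h
    · simp [h]
    · rw [Finset.sum_eq_single 0]
      · simp
      · intro m _ hm; simp [hm]
      · intro h0; exact absurd (Finset.mem_range.2 h) h0

lemma pmfConv_delta0_right (g : ℕ → ℝ) : pmfConv g delta0 = g := by
  funext n
  unfold pmfConv delta0
  rw [Finset.sum_eq_single n]
  · simp
  · intro m hm hmn
    simp only [Finset.mem_range] at hm
    have : n - m ≠ 0 := by omega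
    simp [this]
  · intro h; simp at h

lemma bern_subpmf (k : ℕ) : Subpmf (bern k) := by
  refine ⟨bern_nonneg k, fun N => ?_⟩
  unfold psum bern
  rw [← Finset.sum_div]
  rw [div_le_one (by positivity)]
  calc (∑ n ∈ range N, (k.choose n : ℝ)) = ((∑ n ∈ range N, k.choose n : ℕ) : ℝ) := by push_cast; rfl
    _ ≤ ((2^k : ℕ) : ℝ) := Nat.cast_le.2 (sum_choose_le k N)
    _ = 2^k := by push_cast; rfl

lemma bern_one_val (j : ℕ) : bern 1 j = if j ≤ 1 then 1/2 else 0 := by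
  unfold bern
  rcases j with _ | j
  · norm_num
  · rcases j with _ | j
    · norm_num
    · have : (1:ℕ).choose (j+2) = 0 := Nat.choose_eq_zero_of_lt (by omega)
      simp [this]

lemma pmfConv_bern_one (k : ℕ) : pmfConv (bern k) (bern 1) = bern (k+1) := by
  funext n
  unfold pmfConv
  rcases n with _ | j
  · simp [bern_one_val, bern]
    ring
  · rw [Finset.sum_range_succ, Finset.sum_range_succ]
    have hz : ∑ m ∈ range j, bern k m * bern 1 (j + 1 - m) = 0 := by
      apply Finset.sum_eq_zero
      intro m hm
      simp only [Finset.mem_range] at hm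
      rw [bern_one_val]
      have : ¬ (j + 1 - m ≤ 1) := by omega
      simp [this]
    rw [hz]
    have e1 : j + 1 - j = 1 := by omega
    have e2 : j + 1 - (j+1) = 0 := by omega
    rw [e1, e2, bern_one_val, bern_one_val]
    simp only [le_refl, Nat.zero_le, if_pos, Nat.one_le_iff_ne_zero]
    unfold bern
    have h3 : (k+1).choose (j+1) = k.choose j + k.choose (j+1) := Nat.choose_succ_succ' k j
    rw [h3, pow_succ]
    push_cast
    ring
open Finset

section tilted

variable {q a ν ρ : ℝ} (hq0 : 0 < q) (hq1 : q ≤ 1) (ha : 0 < a)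
  (hν0 : 0 ≤ ν) (hν1 : ν < 1) (hρ0 : 0 < ρ) (hρ1 : ρ < 1)

set_option linter.unusedSectionVars false

include hq0 hq1 ha hν0 hν1 hρ0 hρ1

lemma hnρ : 0 < 1 - ν * ρ := by nlinarith

lemma hγpos : 0 < (1 - ρ) / (1 - ν * ρ) :=
  div_pos (by linarith) (hnρ hq0 hq1 ha hν0 hν1 hρ0 hρ1)

lemma hden_pos : 0 < 1 + q * a * ((1 - ρ) / (1 - ν * ρ)) := by
  have hγ := hγpos hq0 hq1 ha hν0 hν1 hρ0 hρ1
  nlinarith [mul_pos (mul_pos hq0 ha) hγ]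

lemma hnum_pos : 0 < 1 + a * ((1 - ρ) / (1 - ν * ρ)) := by
  have hγ := hγpos hq0 hq1 ha hν0 hν1 hρ0 hρ1
  nlinarith [mul_pos ha hγ]

lemma hL1 : 1 ≤ (1 + a * ((1 - ρ) / (1 - ν * ρ))) / (1 + q * a * ((1 - ρ) / (1 - ν * ρ))) := by
  have hγ := hγpos hq0 hq1 ha hν0 hν1 hρ0 hρ1
  rw [le_div_iff₀ (hden_pos hq0 hq1 ha hν0 hν1 hρ0 hρ1), one_mul]
  nlinarith [mul_nonneg (mul_nonneg (by linarith : (0:ℝ) ≤ 1-q) ha.le) hγ.le]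

lemma hLpos' : 0 < (1 + a * ((1 - ρ) / (1 - ν * ρ))) / (1 + q * a * ((1 - ρ) / (1 - ν * ρ))) :=
  div_pos (hnum_pos hq0 hq1 ha hν0 hν1 hρ0 hρ1) (hden_pos hq0 hq1 ha hν0 hν1 hρ0 hρ1)

lemma hp0q : q ≤ stepDist q a ν 0 := by
  unfold stepDist
  rw [if_pos rfl]
  have h1 : 0 < 1 + a := by linarith
  have h2 : a * (1 - q) / (1 + a) ≤ 1 - q := by
    rw [div_le_iff₀ h1]
    nlinarith
  linarith

lemma tilted_nonneg : ∀ n, 0 ≤ tiltedStepDist q a ν ρ n := by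
  intro n
  unfold tiltedStepDist
  have hL := hLpos' hq0 hq1 ha hν0 hν1 hρ0 hρ1
  refine mul_nonneg (mul_nonneg hL.le (by positivity)) ?_
  unfold stepDist
  split
  · have h1 : (0:ℝ) < 1 + a := by linarith
    have h2 : a*(1-q)/(1+a) ≤ 1-q := by
      rw [div_le_iff₀ h1]; nlinarith
    linarith
  · have h1 : 0 < 1 + a := by linarith
    have h2 : (0:ℝ) ≤ (ν + a) / (1 + a) := by positivity
    have h3 : (0:ℝ) ≤ a * (1 - q) * (1 - ν) / (1 + a)^2 := by
      have hx : (0:ℝ) ≤ a * (1-q) * (1-ν) :=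
        mul_nonneg (mul_nonneg ha.le (by linarith)) (by linarith)
      positivity
    positivity

lemma tilted_zero_ge : q ≤ tiltedStepDist q a ν ρ 0 := by
  unfold tiltedStepDist
  rw [pow_zero, mul_one]
  calc q = 1 * q := (one_mul q).symm
    _ ≤ ((1 + a * ((1 - ρ) / (1 - ν * ρ))) / (1 + q * a * ((1 - ρ) / (1 - ν * ρ)))) *
        stepDist q a ν 0 :=
      mul_le_mul (hL1 hq0 hq1 ha hν0 hν1 hρ0 hρ1) (hp0q hq0 hq1 ha hν0 hν1 hρ0 hρ1) hq0.le
        (le_trans (by norm_num) (hL1 hq0 hq1 ha hν0 hν1 hρ0 hρ1))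

lemma tilted_one_ge : ρ * (a * (1-q) * (1-ν) / (1+a)^2) ≤ tiltedStepDist q a ν ρ 1 := by
  unfold tiltedStepDist stepDist
  simp only [pow_one, if_neg (Nat.one_ne_zero)]
  have h1 : 0 < 1 + a := by linarith
  have hnn : (0:ℝ) ≤ ρ * (a * (1-q) * (1-ν) / (1+a)^2) := by
    have hx : (0:ℝ) ≤ a * (1-q) * (1-ν) :=
      mul_nonneg (mul_nonneg ha.le (by linarith)) (by linarith)
    positivity
  have e : ((ν + a) / (1 + a)) ^ (1-1) = 1 := by norm_num
  rw [e]
  calc ρ * (a * (1-q) * (1-ν) / (1+a)^2)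
      = 1 * (ρ * (a * (1-q) * (1-ν) / (1+a)^2)) := (one_mul _).symm
    _ ≤ ((1 + a * ((1 - ρ) / (1 - ν * ρ))) / (1 + q * a * ((1 - ρ) / (1 - ν * ρ)))) *
        (ρ * (a * (1-q) * (1-ν) / (1+a)^2)) :=
      mul_le_mul_of_nonneg_right (hL1 hq0 hq1 ha hν0 hν1 hρ0 hρ1) hnn
    _ = ((1 + a * ((1 - ρ) / (1 - ν * ρ))) / (1 + q * a * ((1 - ρ) / (1 - ν * ρ)))) * ρ *
        (a * (1-q) * (1-ν) / (1+a)^2 * 1) := by ring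

set_option maxHeartbeats 1000000 in

lemma tilted_psum_le : ∀ N, psum (tiltedStepDist q a ν ρ) N ≤ 1 := by
  intro N
  have h1 : 0 < 1 - ν*ρ := hnρ hq0 hq1 ha hν0 hν1 hρ0 hρ1
  have hγ : 0 < (1 - ρ) / (1 - ν * ρ) := hγpos hq0 hq1 ha hν0 hν1 hρ0 hρ1
  have hLpos : 0 < (1 + a * ((1 - ρ) / (1 - ν * ρ))) / (1 + q * a * ((1 - ρ) / (1 - ν * ρ))) :=
    hLpos' hq0 hq1 ha hν0 hν1 hρ0 hρ1
  set γ := (1 - ρ) / (1 - ν * ρ) with hγdef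
  set L := (1 + a * γ) / (1 + q * a * γ) with hLdef
  set c := a * (1 - q) * (1 - ν) / (1 + a) ^ 2 with hcdef
  set r := (ν + a) / (1 + a) with hrdef
  have h1a : 0 < 1 + a := by linarith
  have hr0 : 0 ≤ r := by rw [hrdef]; positivity
  have hr1 : r < 1 := by rw [hrdef, div_lt_one h1a]; linarith
  have hρr : 0 ≤ ρ * r := by positivity
  have hρr1 : ρ * r < 1 := by
    have hxx : ρ * r ≤ r := by nlinarith
    linarith
  have hc0 : 0 ≤ c := by
    rw [hcdef]
    have hx : (0:ℝ) ≤ a * (1-q) * (1-ν) :=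
      mul_nonneg (mul_nonneg ha.le (by linarith)) (by linarith)
    positivity
  rcases Nat.eq_zero_or_pos N with h | h
  · subst h; rw [psum]; simp
  · obtain ⟨M, rfl⟩ : ∃ M, N = M + 1 := ⟨N - 1, by omega⟩
    rw [psum, Finset.sum_range_succ']
    have hterm : ∀ i, tiltedStepDist q a ν ρ (i+1) = (L * c * ρ) * (ρ*r)^i := by
      intro i
      unfold tiltedStepDist stepDist
      simp only [Nat.add_sub_cancel, if_neg (Nat.succ_ne_zero i)]
      rw [← hγdef, ← hLdef, ← hcdef, ← hrdef, pow_succ, mul_pow]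
      ring
    have hzero : tiltedStepDist q a ν ρ 0 = L * stepDist q a ν 0 := by
      unfold tiltedStepDist; rw [← hγdef, ← hLdef, pow_zero]; ring
    rw [Finset.sum_congr rfl (fun i _ => hterm i), hzero, ← Finset.mul_sum]
    have hgeom : ∑ i ∈ range M, (ρ*r)^i ≤ 1/(1-ρ*r) := by
      rw [geom_sum_eq (by linarith : ρ*r ≠ 1)]
      have e : ((ρ*r)^M - 1)/((ρ*r) - 1) = (1 - (ρ*r)^M)/(1 - ρ*r) := by
        rw [← neg_div_neg_eq]; ring_nf
      rw [e, div_le_div_iff₀ (by linarith) (by linarith)]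
      nlinarith [mul_nonneg (pow_nonneg hρr M) (show (0:ℝ) ≤ 1-ρ*r by linarith)]
    have hLcρ : 0 ≤ L * c * ρ := by positivity
    have hkey : L * c * ρ * (1/(1-ρ*r)) + L * stepDist q a ν 0 = 1 := by
      have hd : (0:ℝ) < 1+a-ρ*ν-ρ*a := by
        nlinarith [mul_pos ha (show (0:ℝ) < 1-ρ by linarith)]
      have hA : (1:ℝ)/(1-ρ*r) = (1+a)/(1+a-ρ*ν-ρ*a) := by
        rw [div_eq_div_iff (ne_of_gt (show (0:ℝ) < 1-ρ*r by linarith)) (ne_of_gt hd)]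
        rw [hrdef]
        field_simp
        ring
      -- S = c*ρ*(1/(1-ρr)) + p0 = 1 - a*(1-q)*(1-ρ)/(1+a-ρν-ρa)
      have hS : c * ρ * (1/(1-ρ*r)) + stepDist q a ν 0
          = 1 - a*(1-q)*(1-ρ)/(1+a-ρ*ν-ρ*a) := by
        unfold stepDist
        rw [if_pos rfl, hA, hcdef]
        obtain ⟨D, hD⟩ : ∃ D, D = 1+a-ρ*ν-ρ*a := ⟨_, rfl⟩
        have hD0 : D ≠ 0 := hD ▸ hd.ne'
        rw [← hD]
        field_simp
        rw [hD]
        ring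
      -- 1 - a(1-q)(1-ρ)/(1+a-ρν-ρa) = (1+qaγ)/(1+aγ)
      have hS2 : 1 - a*(1-q)*(1-ρ)/(1+a-ρ*ν-ρ*a) = (1+q*a*γ)/(1+a*γ) := by
        have h3 : (1:ℝ) - ν*ρ ≠ 0 := ne_of_gt h1
        have hE : (0:ℝ) < 1-ν*ρ+a*(1-ρ) := by
          nlinarith [mul_pos ha (show (0:ℝ) < 1-ρ by linarith)]
        have hEne : (1:ℝ)-ν*ρ+a*(1-ρ) ≠ 0 := ne_of_gt hE
        have e1 : 1+q*a*γ = (1-ν*ρ+q*a*(1-ρ))/(1-ν*ρ) := by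
          rw [hγdef, add_div, div_self h3, mul_div_assoc]
        have e2 : 1+a*γ = (1-ν*ρ+a*(1-ρ))/(1-ν*ρ) := by
          rw [hγdef, add_div, div_self h3, mul_div_assoc]
        rw [e1, e2, div_div_div_comm, div_self h3, div_one]
        have hDD : (1:ℝ)+a-ρ*ν-ρ*a = 1-ν*ρ+a*(1-ρ) := by ring
        rw [hDD, eq_div_iff hEne, sub_mul, one_mul, div_mul_cancel₀ _ hEne]
        ring
      have hfin : L * ((1+q*a*γ)/(1+a*γ)) = 1 := by
        have hx : (1+a*γ) ≠ 0 := ne_of_gt (hnum_pos hq0 hq1 ha hν0 hν1 hρ0 hρ1)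
        have hy : (1+q*a*γ) ≠ 0 := ne_of_gt (hden_pos hq0 hq1 ha hν0 hν1 hρ0 hρ1)
        rw [hLdef, div_mul_div_comm, mul_comm (1+q*a*γ) (1+a*γ)]
        exact div_self (mul_ne_zero hx hy)
      calc L * c * ρ * (1/(1-ρ*r)) + L * stepDist q a ν 0
          = L * (c * ρ * (1/(1-ρ*r)) + stepDist q a ν 0) := by ring
        _ = L * ((1+q*a*γ)/(1+a*γ)) := by rw [hS, hS2]
        _ = 1 := hfin
    calc L * c * ρ * (∑ i ∈ range M, (ρ*r)^i) + L * stepDist q a ν 0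
        ≤ L * c * ρ * (1/(1-ρ*r)) + L * stepDist q a ν 0 := by
          have := mul_le_mul_of_nonneg_left hgeom hLcρ
          linarith
      _ = 1 := hkey

end tilted
open Finset

lemma binom_cs (t : ℕ) (β : ℝ) (hβ0 : 0 < β) (hβ1 : β < 1) :
    ∑ k ∈ range (t+1), (t.choose k : ℝ) * β^k * (1-β)^(t-k) * (1/Real.sqrt ((k:ℝ)+1))
      ≤ 1 / Real.sqrt (β*((t:ℝ)+1)) := by
  set w : ℕ → ℝ := fun k => (t.choose k : ℝ) * β^k * (1-β)^(t-k) with hw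
  have hw0 : ∀ k, 0 ≤ w k := by
    intro k
    have : (0:ℝ) ≤ 1-β := by linarith
    rw [hw]; positivity
  have hsum1 : ∑ k ∈ range (t+1), w k = 1 := by
    calc ∑ k ∈ range (t+1), w k = (β+(1-β))^t := by
          rw [add_pow]
          exact Finset.sum_congr rfl fun k _ => by rw [hw]; ring
      _ = 1 := by norm_num
  have hsum2 : ∑ k ∈ range (t+1), w k * (1/((k:ℝ)+1)) ≤ 1/(β*((t:ℝ)+1)) := by
    rw [le_div_iff₀ (by positivity : (0:ℝ) < β*((t:ℝ)+1)), Finset.sum_mul]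
    have e : ∀ k ∈ range (t+1), (w k * (1/((k:ℝ)+1))) * (β*((t:ℝ)+1))
        = ((t+1).choose (k+1) : ℝ) * β^(k+1) * (1-β)^((t+1)-(k+1)) := by
      intro k hk
      simp only [Finset.mem_range] at hk
      have hc : (t+1) * (t.choose k) = ((t+1).choose (k+1)) * (k+1) := by
        exact_mod_cast Nat.add_one_mul_choose_eq t k
      have hcR : ((t:ℝ)+1) * (t.choose k:ℝ) = ((t+1).choose (k+1) : ℝ) * ((k:ℝ)+1) := by
        exact_mod_cast congrArg (fun x : ℕ => (x:ℝ)) hc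
      have hk1 : ((k:ℝ)+1) ≠ 0 := by positivity
      have et : (t+1)-(k+1) = t-k := by omega
      rw [hw, et]
      field_simp
      linear_combination (β^(k+1)*(1-β)^(t-k)) * hcR
    rw [Finset.sum_congr rfl e]
    have hle : ∑ k ∈ range (t+1), ((t+1).choose (k+1) : ℝ) * β^(k+1) * (1-β)^((t+1)-(k+1))
        ≤ ∑ j ∈ range (t+1+1), ((t+1).choose j : ℝ)*β^j*(1-β)^((t+1)-j) := by
      rw [Finset.sum_range_succ' (fun j => ((t+1).choose j : ℝ)*β^j*(1-β)^((t+1)-j)) (t+1)]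
      have h0 : (0:ℝ) ≤ ((t+1).choose 0 : ℝ)*β^0*(1-β)^(t+1-0) := by
        have : (0:ℝ) ≤ 1-β := by linarith
        positivity
      linarith
    refine hle.trans (le_of_eq ?_)
    calc ∑ j ∈ range (t+1+1), ((t+1).choose j : ℝ)*β^j*(1-β)^((t+1)-j)
        = (β+(1-β))^(t+1) := by
          rw [add_pow]
          exact Finset.sum_congr rfl fun j _ => by ring
      _ = 1 := by norm_num
  -- Cauchy-Schwarz
  set u : ℕ → ℝ := fun k => Real.sqrt (w k) with hu
  set v : ℕ → ℝ := fun k => Real.sqrt (w k) * (1/Real.sqrt ((k:ℝ)+1)) with hv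
  have hcs := Finset.sum_mul_sq_le_sq_mul_sq (range (t+1)) u v
  have huv : ∀ k, u k * v k = w k * (1/Real.sqrt ((k:ℝ)+1)) := by
    intro k
    rw [hu, hv]
    have : Real.sqrt (w k) * (Real.sqrt (w k) * (1/Real.sqrt ((k:ℝ)+1)))
        = (Real.sqrt (w k) * Real.sqrt (w k)) * (1/Real.sqrt ((k:ℝ)+1)) := by ring
    rw [this, Real.mul_self_sqrt (hw0 k)]
  have hu2 : ∀ k, u k ^ 2 = w k := fun k => Real.sq_sqrt (hw0 k)
  have hv2 : ∀ k, v k ^ 2 = w k * (1/((k:ℝ)+1)) := by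
    intro k
    rw [hv, mul_pow, Real.sq_sqrt (hw0 k), div_pow, one_pow,
      Real.sq_sqrt (by positivity : (0:ℝ) ≤ (k:ℝ)+1)]
  rw [Finset.sum_congr rfl (fun k _ => (huv k).symm)] at *
  have hX0 : (0:ℝ) ≤ ∑ k ∈ range (t+1), u k * v k :=
    Finset.sum_nonneg fun k _ => by
      rw [huv k]
      have := hw0 k
      positivity
  refine le_of_sq_le_sq ?_ (by positivity)
  have hb2 : (1 / Real.sqrt (β*((t:ℝ)+1)))^2 = 1/(β*((t:ℝ)+1)) := by
    rw [div_pow, one_pow, Real.sq_sqrt (by positivity : (0:ℝ) ≤ β*((t:ℝ)+1))]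
  rw [hb2]
  calc (∑ k ∈ range (t+1), u k * v k)^2
      ≤ (∑ k ∈ range (t+1), u k ^ 2) * ∑ k ∈ range (t+1), v k ^ 2 := hcs
    _ = (∑ k ∈ range (t+1), w k) * ∑ k ∈ range (t+1), w k * (1/((k:ℝ)+1)) := by
        rw [Finset.sum_congr rfl fun k _ => hu2 k, Finset.sum_congr rfl fun k _ => hv2 k]
    _ ≤ 1 * (1/(β*((t:ℝ)+1))) := by
        apply mul_le_mul (le_of_eq hsum1) hsum2 ?_ (by norm_num)
        exact Finset.sum_nonneg fun k _ => by
          have := hw0 k; positivity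
    _ = 1/(β*((t:ℝ)+1)) := one_mul _
open Finset

noncomputable def convIter (F : ℕ → ℕ → ℝ) : ℕ → ℕ → ℝ
  | 0 => delta0
  | t+1 => pmfConv (convIter F t) (F t)

lemma pmfConv_smul_left (cst : ℝ) (X Y : ℕ → ℝ) (n : ℕ) :
    pmfConv (fun m => cst * X m) Y n = cst * pmfConv X Y n := by
  simp [pmfConv, Finset.mul_sum, mul_assoc]

lemma psum_linear (a b : ℝ) (x y : ℕ → ℝ) (N : ℕ) :
    psum (fun n => a * x n + b * y n) N = a * psum x N + b * psum y N := by
  simp [psum, Finset.sum_add_distrib, Finset.mul_sum]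

lemma bern_one_psum {N : ℕ} (hN : 2 ≤ N) : psum (bern 1) N = 1 := by
  unfold psum
  rw [← Finset.sum_subset (Finset.range_subset_range.2 hN)]
  · rw [show (2:ℕ) = 1+1 by rfl, Finset.sum_range_succ, Finset.sum_range_succ]
    norm_num [bern_one_val]
  · intro x _ hx
    simp only [Finset.mem_range] at hx
    rw [bern_one_val]
    have : ¬ (x ≤ 1) := by omega
    simp [this]

lemma convIter_main (F : ℕ → ℕ → ℝ) (β : ℝ) (hβ0 : 0 < β) (hβh : β ≤ 1/2)
    (hF : ∀ s, Subpmf (F s)) (hF0 : ∀ s, β/2 ≤ F s 0) (hF1 : ∀ s, β/2 ≤ F s 1) :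
    ∀ t, ∃ h : ℕ → ℕ → ℝ, (∀ k, Subpmf (h k)) ∧
      ∀ n, convIter F t n ≤ ∑ k ∈ range (t+1),
        (t.choose k : ℝ) * β^k * (1-β)^(t-k) * pmfConv (bern k) (h k) n := by
  intro t
  induction t with
  | zero =>
    refine ⟨fun _ => delta0, fun _ => delta0_subpmf, fun n => ?_⟩
    have hb0 : bern 0 = delta0 := by
      funext m
      rcases m with _ | m
      · simp [bern, delta0]
      · simp [bern, delta0]
    rw [show (0:ℕ)+1 = 1 from rfl, Finset.range_one, Finset.sum_singleton, hb0,
      pmfConv_delta0_right]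
    simp [convIter]
  | succ t IH =>
    obtain ⟨h, hsub, hbd⟩ := IH
    have hβ1 : (0:ℝ) < 1 - β := by linarith
    set g : ℕ → ℝ := fun n => (F t n - β * bern 1 n)/(1-β) with hgdef
    have hg0 : ∀ n, 0 ≤ g n := by
      intro n
      rw [hgdef]
      apply div_nonneg _ hβ1.le
      rcases Nat.lt_or_ge n 2 with hn | hn
      · interval_cases n
        · have := hF0 t; rw [bern_one_val]; norm_num; linarith
        · have := hF1 t; rw [bern_one_val]; norm_num; linarith
      · rw [bern_one_val]
        have : ¬ (n ≤ 1) := by omega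
        simp [this]
        exact ((hF t).1 n)
    have hgpsum : ∀ N, psum g N ≤ 1 := by
      intro N
      have hps : psum g N = (psum (F t) N - β * psum (bern 1) N) / (1-β) := by
        unfold psum
        rw [eq_div_iff (ne_of_gt hβ1), Finset.sum_mul, Finset.mul_sum]
        rw [← Finset.sum_sub_distrib]
        apply Finset.sum_congr rfl
        intro m _
        rw [hgdef]
        field_simp
      rcases Nat.lt_or_ge N 2 with hN | hN
      · interval_cases N
        · simp [psum]
        · rw [psum, Finset.sum_range_one, hgdef]
          rw [div_le_one hβ1]
          have h2 : psum (F t) 2 ≤ 1 := (hF t).2 2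
          have h3 : psum (F t) 2 = F t 0 + F t 1 := by
            unfold psum; rw [show (2:ℕ) = 1+1 by rfl, Finset.sum_range_succ, Finset.sum_range_one]
          have h4 := hF1 t
          rw [bern_one_val]
          norm_num
          linarith
      · rw [hps, bern_one_psum hN, div_le_one hβ1]
        have := (hF t).2 N
        linarith
    have hdecomp : F t = fun n => β * bern 1 n + (1-β) * g n := by
      funext n
      rw [hgdef]
      field_simp
      ring
    -- the new family
    set h' : ℕ → ℕ → ℝ := fun k => if k = 0 then pmfConv (h 0) g else fun n =>
      ((t.choose (k-1) : ℝ)/((t+1).choose k : ℝ)) * h (k-1) n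
      + ((t.choose k : ℝ)/((t+1).choose k : ℝ)) * pmfConv (h k) g n with h'def
    refine ⟨h', ?_, ?_⟩
    · intro k
      rcases k with _ | j
      · simpa [h'def] using (hsub 0).conv ⟨hg0, hgpsum⟩
      · have hA0 : (0:ℝ) ≤ (t.choose j : ℝ)/((t+1).choose (j+1) : ℝ) := by positivity
        have hB0 : (0:ℝ) ≤ (t.choose (j+1) : ℝ)/((t+1).choose (j+1) : ℝ) := by positivity
        constructor
        · intro n
          simp only [h'def, if_neg (Nat.succ_ne_zero j), Nat.add_sub_cancel]
          exact add_nonneg (mul_nonneg hA0 ((hsub j).1 n))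
            (mul_nonneg hB0 (((hsub (j+1)).conv ⟨hg0, hgpsum⟩).1 n))
        · intro N
          have e : h' (j+1) = fun n =>
              ((t.choose j : ℝ)/((t+1).choose (j+1) : ℝ)) * h j n
              + ((t.choose (j+1) : ℝ)/((t+1).choose (j+1) : ℝ)) * pmfConv (h (j+1)) g n := by
            simp only [h'def, if_neg (Nat.succ_ne_zero j), Nat.add_sub_cancel]
          rw [e, psum_linear]
          rcases Nat.lt_or_ge (t+1) (j+1) with hj | hj
          · have hz : (t+1).choose (j+1) = 0 := Nat.choose_eq_zero_of_lt hj
            rw [hz]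
            norm_num
          · have hz : 0 < (t+1).choose (j+1) := Nat.choose_pos hj
            have hcoef : (t.choose j : ℝ)/((t+1).choose (j+1) : ℝ)
                + (t.choose (j+1) : ℝ)/((t+1).choose (j+1) : ℝ) = 1 := by
              rw [← add_div, div_eq_one_iff_eq (by exact_mod_cast hz.ne')]
              exact_mod_cast congrArg (fun x : ℕ => (x:ℝ)) (Nat.choose_succ_succ' t j).symm
            calc ((t.choose j : ℝ)/((t+1).choose (j+1) : ℝ)) * psum (h j) N
                + ((t.choose (j+1) : ℝ)/((t+1).choose (j+1) : ℝ)) * psum (pmfConv (h (j+1)) g) N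
                ≤ ((t.choose j : ℝ)/((t+1).choose (j+1) : ℝ)) * 1
                + ((t.choose (j+1) : ℝ)/((t+1).choose (j+1) : ℝ)) * 1 := by
                  apply add_le_add
                  · exact mul_le_mul_of_nonneg_left ((hsub j).2 N) hA0
                  · exact mul_le_mul_of_nonneg_left (((hsub (j+1)).conv ⟨hg0, hgpsum⟩).2 N) hB0
              _ = 1 := by rw [mul_one, mul_one, hcoef]
    · intro n
      set P1 : ℕ → ℝ := fun j => pmfConv (bern (j+1)) (h j) n with hP1
      set Q : ℕ → ℝ := fun k => pmfConv (bern k) (pmfConv (h k) g) n with hQ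
      set S : ℝ := (∑ j ∈ range (t+1), (t.choose j : ℝ)*β^(j+1)*(1-β)^(t-j) * P1 j)
        + (∑ k ∈ range (t+2), (t.choose k : ℝ)*β^k*(1-β)^(t+1-k) * Q k) with hS
      have step2 : convIter F (t+1) n ≤ ∑ k ∈ range (t+1),
          (t.choose k : ℝ) * β^k * (1-β)^(t-k) * pmfConv (pmfConv (bern k) (h k)) (F t) n := by
        have hm := pmfConv_mono_left hbd (hF t).1 n
        refine le_trans (le_of_eq (by simp [convIter])) (le_trans hm (le_of_eq ?_))
        rw [pmfConv_sum_left]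
        exact Finset.sum_congr rfl fun k _ => pmfConv_smul_left _ _ _ n
      have hterm : ∀ k, pmfConv (pmfConv (bern k) (h k)) (F t) n
          = β * P1 k + (1-β) * Q k := by
        intro k
        conv_lhs => rw [hdecomp]
        rw [pmfConv_comb (pmfConv (bern k) (h k)) (bern 1) g β (1-β) n]
        have e1 : pmfConv (pmfConv (bern k) (h k)) (bern 1) = pmfConv (bern (k+1)) (h k) := by
          rw [pmfConv_assoc, pmfConv_comm (h k) (bern 1), ← pmfConv_assoc, pmfConv_bern_one]
        have e2 : pmfConv (pmfConv (bern k) (h k)) g = pmfConv (bern k) (pmfConv (h k) g) :=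
          pmfConv_assoc _ _ _
        rw [e1, e2]
      have claimB : (∑ k ∈ range (t+1),
          (t.choose k : ℝ) * β^k * (1-β)^(t-k) * pmfConv (pmfConv (bern k) (h k)) (F t) n) = S := by
        rw [Finset.sum_congr rfl fun k _ => by rw [hterm k]]
        have expand : ∀ k, (t.choose k : ℝ) * β^k * (1-β)^(t-k) * (β * P1 k + (1-β) * Q k)
            = (t.choose k : ℝ)*β^(k+1)*(1-β)^(t-k) * P1 k
              + ((t.choose k : ℝ)*β^k*(1-β)^(t-k)*(1-β)) * Q k := by
          intro k; ring
        rw [Finset.sum_congr rfl fun k _ => expand k, Finset.sum_add_distrib, hS]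
        congr 1
        rw [Finset.sum_range_succ _ (t+1)]
        have hlast : (t.choose (t+1) : ℝ)*β^(t+1)*(1-β)^(t+1-(t+1)) * Q (t+1) = 0 := by
          rw [Nat.choose_eq_zero_of_lt (by omega)]
          norm_num
        rw [hlast, add_zero]
        apply Finset.sum_congr rfl
        intro k hk
        simp only [Finset.mem_range] at hk
        have : t+1-k = (t-k)+1 := by omega
        rw [this, pow_succ]
        ring
      have claimA : (∑ k ∈ range (t+1+1),
          ((t+1).choose k : ℝ) * β^k * (1-β)^(t+1-k) * pmfConv (bern k) (h' k) n) = S := by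
        rw [Finset.sum_range_succ' _ (t+1)]
        have hzero : ((t+1).choose 0 : ℝ) * β^0 * (1-β)^(t+1-0) * pmfConv (bern 0) (h' 0) n
            = (t.choose 0 : ℝ)*β^0*(1-β)^(t+1-0) * Q 0 := by
          have : h' 0 = pmfConv (h 0) g := by simp [h'def]
          rw [this]
          norm_num
          exact Or.inl rfl
        rw [hzero]
        have hjterm : ∀ j ∈ range (t+1),
            ((t+1).choose (j+1) : ℝ) * β^(j+1) * (1-β)^(t+1-(j+1)) * pmfConv (bern (j+1)) (h' (j+1)) n
            = (t.choose j : ℝ)*β^(j+1)*(1-β)^(t-j) * P1 j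
              + (t.choose (j+1) : ℝ)*β^(j+1)*(1-β)^(t+1-(j+1)) * Q (j+1) := by
          intro j hj
          simp only [Finset.mem_range] at hj
          have hne : ((t+1).choose (j+1) : ℝ) ≠ 0 := by
            exact_mod_cast (Nat.choose_pos (by omega : j+1 ≤ t+1)).ne'
          have e : h' (j+1) = fun m =>
              ((t.choose j : ℝ)/((t+1).choose (j+1) : ℝ)) * h j m
              + ((t.choose (j+1) : ℝ)/((t+1).choose (j+1) : ℝ)) * pmfConv (h (j+1)) g m := by
            simp only [h'def, if_neg (Nat.succ_ne_zero j), Nat.add_sub_cancel]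
          rw [e, pmfConv_comb (bern (j+1)) (h j) (pmfConv (h (j+1)) g) _ _ n]
          have et : t+1-(j+1) = t-j := by omega
          rw [et]
          field_simp
          ring
        rw [Finset.sum_congr rfl hjterm, Finset.sum_add_distrib, hS]
        have hq2 : ∑ k ∈ range (t+2), (t.choose k : ℝ)*β^k*(1-β)^(t+1-k) * Q k
            = (∑ j ∈ range (t+1), (t.choose (j+1) : ℝ)*β^(j+1)*(1-β)^(t+1-(j+1)) * Q (j+1))
              + (t.choose 0 : ℝ)*β^0*(1-β)^(t+1-0) * Q 0 := by
          rw [show t+2 = (t+1)+1 from rfl]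
          exact Finset.sum_range_succ' _ (t+1)
        rw [hq2]
        ring
      exact step2.trans (le_of_eq (claimB.trans claimA.symm))
open Finset

section tilted

variable {q a ν ρ : ℝ} (hq0 : 0 < q) (hq1 : q ≤ 1) (ha : 0 < a)
  (hν0 : 0 ≤ ν) (hν1 : ν < 1) (hρ0 : 0 < ρ) (hρ1 : ρ < 1)

include hq0 hq1 ha hν0 hν1 hρ0 hρ1

end tilted

lemma convIter_le (F : ℕ → ℕ → ℝ) (β : ℝ) (hβ0 : 0 < β) (hβh : β ≤ 1/2)
    (hF : ∀ s, Subpmf (F s)) (hF0 : ∀ s, β/2 ≤ F s 0) (hF1 : ∀ s, β/2 ≤ F s 1)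
    (t n : ℕ) : convIter F t n ≤ Real.sqrt 2 / Real.sqrt (β*((t:ℝ)+1)) := by
  obtain ⟨h, hsub, hbd⟩ := convIter_main F β hβ0 hβh hF hF0 hF1 t
  refine (hbd n).trans ?_
  have hβ1 : β < 1 := by linarith
  have hconv : ∀ k, pmfConv (bern k) (h k) n ≤ Real.sqrt 2 / Real.sqrt ((k:ℝ)+1) := by
    intro k
    have hM : (0:ℝ) ≤ Real.sqrt 2 / Real.sqrt ((k:ℝ)+1) := by positivity
    calc pmfConv (bern k) (h k) n
        ≤ ∑ m ∈ range (n+1), (Real.sqrt 2 / Real.sqrt ((k:ℝ)+1)) * h k (n-m) :=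
          Finset.sum_le_sum fun m _ =>
            mul_le_mul_of_nonneg_right (by exact_mod_cast bern_le k m) ((hsub k).1 _)
      _ = (Real.sqrt 2 / Real.sqrt ((k:ℝ)+1)) * ∑ m ∈ range (n+1), h k (n-m) := by
          rw [Finset.mul_sum]
      _ ≤ (Real.sqrt 2 / Real.sqrt ((k:ℝ)+1)) * 1 := by
          apply mul_le_mul_of_nonneg_left _ hM
          have hrefl := Finset.sum_range_reflect (h k) (n+1)
          simp only [Nat.add_sub_cancel] at hrefl
          calc ∑ m ∈ range (n+1), h k (n-m) = ∑ m ∈ range (n+1), h k m := hrefl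
            _ ≤ 1 := (hsub k).2 (n+1)
      _ = Real.sqrt 2 / Real.sqrt ((k:ℝ)+1) := mul_one _
  have hw0 : ∀ k, (0:ℝ) ≤ (t.choose k : ℝ) * β^k * (1-β)^(t-k) := by
    intro k
    have : (0:ℝ) ≤ 1-β := by linarith
    positivity
  calc ∑ k ∈ range (t+1), (t.choose k : ℝ) * β^k * (1-β)^(t-k) * pmfConv (bern k) (h k) n
      ≤ ∑ k ∈ range (t+1), (t.choose k : ℝ) * β^k * (1-β)^(t-k)
          * (Real.sqrt 2 / Real.sqrt ((k:ℝ)+1)) :=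
        Finset.sum_le_sum fun k _ => mul_le_mul_of_nonneg_left (hconv k) (hw0 k)
    _ = Real.sqrt 2 * ∑ k ∈ range (t+1), (t.choose k : ℝ) * β^k * (1-β)^(t-k)
          * (1/Real.sqrt ((k:ℝ)+1)) := by
        rw [Finset.mul_sum]
        exact Finset.sum_congr rfl fun k _ => by ring
    _ ≤ Real.sqrt 2 * (1/Real.sqrt (β*((t:ℝ)+1))) := by
        apply mul_le_mul_of_nonneg_left (binom_cs t β hβ0 hβ1) (Real.sqrt_nonneg 2)
    _ = Real.sqrt 2 / Real.sqrt (β*((t:ℝ)+1)) := by ring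

set_option maxHeartbeats 1600000 in

/-- For every `T > 0` there are `C < ∞` and `ε₀ ∈ (0,1]` such that for all
`ε ∈ (0,ε₀]`, `t ≤ ε^{−3}T` and `n ∈ ℕ`, the `t`-fold convolution satisfies
`P_ε^t(n) ≤ C ε^{−1/2} (t+1)^{−1/2}`. -/
theorem tiltedConvIter_sup_bound (ν α ρ : ℝ) (J : ℕ)
    (hν0 : 0 ≤ ν) (hν1 : ν < 1) (hα : 0 < α) (hρ0 : 0 < ρ) (hρ1 : ρ < 1) (hJ : 0 < J)
    (T : ℝ) (hT : 0 < T) :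
    ∃ C : ℝ, ∃ ε₀ : ℝ, ε₀ ∈ Set.Ioc (0 : ℝ) 1 ∧
      ∀ ε ∈ Set.Ioc (0 : ℝ) ε₀, ∀ t : ℕ, (t : ℝ) ≤ T / ε ^ 3 → ∀ n : ℕ,
        tiltedConvIter ν α ρ ε J t n ≤
          C * ε ^ (-(1 : ℝ) / 2) * ((t : ℝ) + 1) ^ (-(1 : ℝ) / 2) := by
  have h1ν : (0:ℝ) < 1 - ν := by linarith
  set c1 : ℝ := ρ * (α * Real.exp (-(J:ℝ))) * Real.exp (-1) * (1-ν) / (1+α)^2 with hc1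
  have hc1pos : 0 < c1 := by rw [hc1]; positivity
  set c : ℝ := min c1 (1/4) with hc
  have hcpos : 0 < c := lt_min hc1pos (by norm_num)
  have hc4 : c ≤ 1/4 := min_le_right _ _
  refine ⟨Real.sqrt 2 / Real.sqrt (2*c), 1, ⟨zero_lt_one, le_refl 1⟩, ?_⟩
  rintro ε ⟨hε0, hε1⟩ t ht n
  set F : ℕ → ℕ → ℝ := fun s =>
    tiltedStepDist (Real.exp (-ε)) (α * Real.exp (-ε * ((s % J : ℕ) : ℝ))) ν ρ with hFdef
  have hiter : ∀ u, tiltedConvIter ν α ρ ε J u = convIter F u := by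
    intro u
    induction u with
    | zero => rfl
    | succ u ih =>
      show pmfConv (tiltedConvIter ν α ρ ε J u) _ = pmfConv (convIter F u) (F u)
      rw [ih, hFdef]
  have hq0 : 0 < Real.exp (-ε) := Real.exp_pos _
  have hq1 : Real.exp (-ε) ≤ 1 := Real.exp_le_one_iff.2 (by linarith)
  have haS : ∀ s : ℕ, 0 < α * Real.exp (-ε * ((s % J : ℕ) : ℝ)) := fun s => by positivity
  have hsub : ∀ s, Subpmf (F s) := fun s =>
    ⟨tilted_nonneg hq0 hq1 (haS s) hν0 hν1 hρ0 hρ1,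
     tilted_psum_le hq0 hq1 (haS s) hν0 hν1 hρ0 hρ1⟩
  set β : ℝ := 2*c*ε with hβ
  have hβ0 : 0 < β := by rw [hβ]; positivity
  have hβhalf : β/2 = c*ε := by rw [hβ]; ring
  have hcε : c*ε ≤ 1/4 := by nlinarith
  have hβh : β ≤ 1/2 := by rw [hβ]; nlinarith
  have hF0 : ∀ s, β/2 ≤ F s 0 := by
    intro s
    have h1 : Real.exp (-ε) ≤ F s 0 :=
      tilted_zero_ge hq0 hq1 (haS s) hν0 hν1 hρ0 hρ1
    have h2 : Real.exp (-1) ≤ Real.exp (-ε) := Real.exp_le_exp.2 (by linarith)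
    have h3 : (1:ℝ)/4 ≤ Real.exp (-1) := by
      have h4 : Real.exp 1 ≤ 4 := le_trans Real.exp_one_lt_d9.le (by norm_num)
      have h5 := one_div_le_one_div_of_le (Real.exp_pos 1) h4
      rw [Real.exp_neg, ← one_div]
      linarith
    rw [hβhalf]
    linarith
  have hF1 : ∀ s, β/2 ≤ F s 1 := by
    intro s
    set a : ℝ := α * Real.exp (-ε * ((s % J : ℕ) : ℝ)) with hadef
    have h1 : ρ * (a*(1-Real.exp (-ε))*(1-ν)/(1+a)^2) ≤ F s 1 :=
      tilted_one_ge hq0 hq1 (haS s) hν0 hν1 hρ0 hρ1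
    have hm0 : (0:ℝ) ≤ ((s % J : ℕ) : ℝ) := Nat.cast_nonneg _
    have hm : ((s % J : ℕ) : ℝ) ≤ (J:ℝ) := by
      exact_mod_cast Nat.cast_le.2 (Nat.le_of_lt (Nat.mod_lt s hJ))
    have hεm : ε * ((s % J : ℕ) : ℝ) ≤ (J:ℝ) := by
      nlinarith [mul_nonneg (show (0:ℝ) ≤ 1-ε by linarith) hm0]
    have hexp_lb : Real.exp (-(J:ℝ)) ≤ Real.exp (-ε * ((s % J : ℕ) : ℝ)) := by
      apply Real.exp_le_exp.2
      nlinarith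
    have hexp_ub : Real.exp (-ε * ((s % J : ℕ) : ℝ)) ≤ 1 := by
      rw [Real.exp_le_one_iff]
      nlinarith [mul_nonneg hε0.le hm0]
    have ha_lb : α * Real.exp (-(J:ℝ)) ≤ a := by
      rw [hadef]; exact mul_le_mul_of_nonneg_left hexp_lb hα.le
    have ha_ub : a ≤ α := by
      rw [hadef]
      calc α * Real.exp (-ε * ((s % J : ℕ) : ℝ)) ≤ α * 1 :=
            mul_le_mul_of_nonneg_left hexp_ub hα.le
        _ = α := mul_one α
    have ha0 : 0 < a := haS s
    have hq_lb : ε * Real.exp (-1) ≤ 1 - Real.exp (-ε) := by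
      have hx := Real.add_one_le_exp ε
      have hinv : (0:ℝ) ≤ (Real.exp ε)⁻¹ := by positivity
      have hxx : (ε+1) * (Real.exp ε)⁻¹ ≤ Real.exp ε * (Real.exp ε)⁻¹ :=
        mul_le_mul_of_nonneg_right hx hinv
      rw [mul_inv_cancel₀ (Real.exp_pos ε).ne', add_mul, one_mul] at hxx
      have he : Real.exp (-ε) = (Real.exp ε)⁻¹ := Real.exp_neg ε
      have h5 : ε * Real.exp (-ε) ≤ 1 - Real.exp (-ε) := by
        rw [he]
        linarith
      have h6 : Real.exp (-1) ≤ Real.exp (-ε) := Real.exp_le_exp.2 (by linarith)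
      have h7 : ε * Real.exp (-1) ≤ ε * Real.exp (-ε) :=
        mul_le_mul_of_nonneg_left h6 hε0.le
      linarith
    have hnum : (α * Real.exp (-(J:ℝ))) * (ε * Real.exp (-1)) * (1-ν)
        ≤ a * (1-Real.exp (-ε)) * (1-ν) := by
      apply mul_le_mul_of_nonneg_right _ h1ν.le
      apply mul_le_mul ha_lb hq_lb (by positivity) ha0.le
    have hden : (1+a)^2 ≤ (1+α)^2 := by nlinarith [ha_ub, ha0.le, hα.le]
    have hfrac : (α * Real.exp (-(J:ℝ))) * (ε * Real.exp (-1)) * (1-ν) / (1+α)^2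
        ≤ a * (1-Real.exp (-ε)) * (1-ν) / (1+a)^2 := by
      have hqpos : (0:ℝ) ≤ 1 - Real.exp (-ε) := by
        nlinarith [hq_lb, mul_pos hε0 (Real.exp_pos (-1))]
      apply div_le_div₀ (mul_nonneg (mul_nonneg ha0.le hqpos) h1ν.le) hnum (by positivity) hden
    have hkey : c1 * ε ≤ ρ * (a*(1-Real.exp (-ε))*(1-ν)/(1+a)^2) := by
      have e1 : c1 * ε = ρ * ((α * Real.exp (-(J:ℝ))) * (ε * Real.exp (-1)) * (1-ν) / (1+α)^2) := by
        rw [hc1]; ring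
      rw [e1]
      exact mul_le_mul_of_nonneg_left hfrac hρ0.le
    have hc_le : c ≤ c1 := min_le_left _ _
    have h8 : c * ε ≤ c1 * ε := mul_le_mul_of_nonneg_right hc_le hε0.le
    rw [hβhalf]
    linarith
  have hmain := convIter_le F β hβ0 hβh hsub hF0 hF1 t n
  rw [hiter t]
  refine hmain.trans (le_of_eq ?_)
  have ht1 : (0:ℝ) < (t:ℝ)+1 := by positivity
  have hrw : ∀ x : ℝ, 0 < x → x ^ (-(1:ℝ)/2) = (Real.sqrt x)⁻¹ := by
    intro x hx
    rw [show (-(1:ℝ)/2) = -(1/2) by norm_num, Real.rpow_neg hx.le, ← Real.sqrt_eq_rpow]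
  rw [hrw ε hε0, hrw ((t:ℝ)+1) ht1]
  rw [show β*((t:ℝ)+1) = (2*c)*(ε*((t:ℝ)+1)) by rw [hβ]; ring,
    Real.sqrt_mul (by positivity) _, Real.sqrt_mul hε0.le _]
  ring

end AUX
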